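/- arXiv:2309.15075 — 4 statements merged into one kernel-verified Lean document; each statement's English description precedes it below -/
import Mathlib

section
/- The logistic loss φ(t) = log(1 + e^{−t}) is classification-calibrated: for every η ∈ [0,1] with η ≠ 1/2, H⁻(η) > H(η), where H⁻(η) = inf_{α: α(2η−1) ≤ 0} [η φ(α) + (1−η) φ(−α)] and H(η) = inf_{α ∈ ℝ} [η φ(α) + (1−η) φ(−α)]. -/
open Real

/-- The logistic loss `φ(t) = log(1 + e^{−t})`. -/
noncomputable def logisticLoss (t : ℝ) : ℝ := Real.log (1 + Real.exp (-t))

lemma logistic_risk_eq (η a : ℝ) :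
    η * logisticLoss a + (1 - η) * logisticLoss (-a)
      = (1 - η) * a + Real.log (1 + Real.exp (-a)) := by
  have h1 : logisticLoss (-a) = a + Real.log (1 + Real.exp (-a)) := by
    unfold logisticLoss
    rw [neg_neg]
    have h : (1 : ℝ) + Real.exp a = Real.exp a * (1 + Real.exp (-a)) := by
      rw [mul_add, mul_one, ← Real.exp_add]
      simp [Real.exp_zero]
      ring_nf
    rw [h, Real.log_mul (Real.exp_ne_zero a) (by positivity), Real.log_exp]
  unfold logisticLoss at *
  rw [h1]; ring

lemma logistic_lower (η a : ℝ) (ha : a * (2 * η - 1) ≤ 0) :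
    Real.log 2 ≤ (1 - η) * a + Real.log (1 + Real.exp (-a)) := by
  have he : Real.exp (-a/2) * Real.exp (-a/2) = Real.exp (-a) := by
    rw [← Real.exp_add]; ring_nf
  have h1 : 2 * Real.exp (-a/2) ≤ 1 + Real.exp (-a) := by
    nlinarith [sq_nonneg (1 - Real.exp (-a/2)), Real.exp_pos (-a/2)]
  have h2 : Real.log (2 * Real.exp (-a/2)) ≤ Real.log (1 + Real.exp (-a)) :=
    Real.log_le_log (by positivity) h1
  rw [Real.log_mul two_ne_zero (Real.exp_ne_zero _), Real.log_exp] at h2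
  nlinarith

lemma logistic_upper (η : ℝ) (h0 : 0 ≤ η) (h1 : η ≤ 1) (hne : η ≠ 1/2) :
    ∃ a : ℝ, (1 - η) * a + Real.log (1 + Real.exp (-a)) < Real.log 2 := by
  rcases eq_or_lt_of_le h0 with h0' | h0'
  · -- η = 0, take a = -1
    refine ⟨-1, ?_⟩
    rw [← h0']
    have : Real.log (1 + Real.exp 1) < Real.log (2 * Real.exp 1) := by
      apply Real.log_lt_log (by positivity)
      nlinarith [Real.exp_one_gt_d9]
    rw [Real.log_mul two_ne_zero (Real.exp_ne_zero _), Real.log_exp] at this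
    simp only [neg_neg]
    linarith
  rcases eq_or_lt_of_le h1 with h1' | h1'
  · -- η = 1, take a = 1
    refine ⟨1, ?_⟩
    rw [h1']
    have : Real.log (1 + Real.exp (-1)) < Real.log 2 := by
      apply Real.log_lt_log (by positivity)
      have : Real.exp (-1) < 1 := Real.exp_lt_one_iff.mpr (by norm_num)
      linarith
    linarith
  -- 0 < η < 1
  have hη1 : 0 < 1 - η := by linarith
  refine ⟨Real.log η - Real.log (1 - η), ?_⟩
  have hexp : Real.exp (-(Real.log η - Real.log (1 - η))) = (1 - η) / η := by
    rw [neg_sub, Real.exp_sub, Real.exp_log hη1, Real.exp_log h0']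
  rw [hexp]
  have hsum : (1 : ℝ) + (1 - η) / η = 1 / η := by
    field_simp
    ring
  rw [hsum]
  have hlog : Real.log (1 / η) = -Real.log η := by
    rw [one_div, Real.log_inv]
  rw [hlog]
  have hxy : (1 / η : ℝ) ≠ 1 / (1 - η) := by
    intro h
    apply hne
    have : η = 1 - η := by
      field_simp at h
      linarith
    linarith
  have := strictConcaveOn_log_Ioi.2 (Set.mem_Ioi.mpr (by positivity : (0:ℝ) < 1/η))
    (Set.mem_Ioi.mpr (by positivity : (0:ℝ) < 1/(1-η))) hxy h0' hη1 (by ring)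
  have e1 : η • (1/η : ℝ) + (1-η) • (1/(1-η) : ℝ) = 2 := by
    field_simp
    norm_num
    rw [mul_inv_cancel₀ h0'.ne', mul_inv_cancel₀ hη1.ne']; norm_num
  rw [e1] at this
  have e2 : Real.log (1/(1-η)) = -Real.log (1-η) := by
    rw [one_div, Real.log_inv]
  rw [e2] at this
  simp only [smul_eq_mul] at this
  nlinarith [this]

/-- **Classification calibration of the logistic loss**: for every `η ∈ [0,1]` with
`η ≠ 1/2`, `H⁻(η) > H(η)`, where `H(η)` is the unconstrained infimum of the conditional
`φ`-risk and `H⁻(η)` is the infimum restricted to `α` with `α(2η−1) ≤ 0`. -/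
theorem logistic_classification_calibrated (η : ℝ) (hη : η ∈ Set.Icc (0:ℝ) 1)
    (hne : η ≠ 1/2) :
    sInf {v : ℝ | ∃ a : ℝ, v = η * logisticLoss a + (1 - η) * logisticLoss (-a)}
      < sInf {v : ℝ | ∃ a : ℝ, a * (2 * η - 1) ≤ 0 ∧
          v = η * logisticLoss a + (1 - η) * logisticLoss (-a)} := by
  obtain ⟨h0, h1⟩ := hη
  obtain ⟨a₀, ha₀⟩ := logistic_upper η h0 h1 hne
  have hBdd : BddBelow {v : ℝ | ∃ a : ℝ,
      v = η * logisticLoss a + (1 - η) * logisticLoss (-a)} := by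
    refine ⟨0, ?_⟩
    rintro v ⟨a, rfl⟩
    have hφ : ∀ t : ℝ, 0 ≤ logisticLoss t := fun t =>
      Real.log_nonneg (by nlinarith [Real.exp_pos (-t)])
    have := hφ a; have := hφ (-a)
    nlinarith
  have hU : sInf {v : ℝ | ∃ a : ℝ,
      v = η * logisticLoss a + (1 - η) * logisticLoss (-a)}
      ≤ η * logisticLoss a₀ + (1 - η) * logisticLoss (-a₀) :=
    csInf_le hBdd ⟨a₀, rfl⟩
  have hUval : η * logisticLoss a₀ + (1 - η) * logisticLoss (-a₀) < Real.log 2 := by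
    rw [logistic_risk_eq]; exact ha₀
  have hCne : {v : ℝ | ∃ a : ℝ, a * (2 * η - 1) ≤ 0 ∧
      v = η * logisticLoss a + (1 - η) * logisticLoss (-a)}.Nonempty :=
    ⟨η * logisticLoss 0 + (1 - η) * logisticLoss (-0), 0, by norm_num, rfl⟩
  have hC : Real.log 2 ≤ sInf {v : ℝ | ∃ a : ℝ, a * (2 * η - 1) ≤ 0 ∧
      v = η * logisticLoss a + (1 - η) * logisticLoss (-a)} := by
    apply le_csInf hCne
    rintro v ⟨a, hc, rfl⟩
    rw [logistic_risk_eq]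
    exact logistic_lower η a hc
  linarith
end

section
/- For ψ: [0,∞) → [0,∞) and c > 0, define ψ_c(δ) := ψ(δ + c). Then for all u > 0 and ε ∈ (0,1], ψ_c^♯(u) ≤ max(ψ^♯(εu/2) − c, cε), where ψ^♯(ε) = inf{δ > 0 : sup_{σ ≥ δ} ψ(σ)/σ ≤ ε}. -/
open Set ENNReal

/-- The ♭-transform: `ψ^♭(δ) = sup_{σ ≥ δ, σ ≥ 0} ψ(σ)/σ` (valued in `ℝ≥0∞`). -/
noncomputable def flatTransform (ψ : ℝ → ℝ) (δ : ℝ) : ℝ≥0∞ :=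
  ⨆ σ ∈ {σ : ℝ | δ ≤ σ ∧ 0 ≤ σ}, ENNReal.ofReal (ψ σ / σ)

/-- The ♯-transform: `ψ^♯(ε) = inf{δ > 0 : ψ^♭(δ) ≤ ε}`, with `inf ∅ = ∞`. -/
noncomputable def sharpTransform (ψ : ℝ → ℝ) (ε : ℝ) : ℝ≥0∞ :=
  ⨅ δ ∈ {δ : ℝ | 0 < δ ∧ flatTransform ψ δ ≤ ENNReal.ofReal ε}, ENNReal.ofReal δ

/-- For `ψ : [0,∞) → [0,∞)` and `c > 0`, the shifted function `ψ_c(δ) := ψ(δ + c)`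
satisfies `ψ_c^♯(u) ≤ max(ψ^♯(εu/2) − c, cε)` for all `u > 0` and `ε ∈ (0,1]`. -/
theorem sharpTransform_shift (ψ : ℝ → ℝ) (hψ : ∀ x, 0 ≤ ψ x)
    (c : ℝ) (hc : 0 < c) (u ε : ℝ) (hu : 0 < u) (hε : ε ∈ Set.Ioc (0:ℝ) 1) :
    sharpTransform (fun δ => ψ (δ + c)) u
      ≤ max (sharpTransform ψ (ε * u / 2) - ENNReal.ofReal c)
          (ENNReal.ofReal (c * ε)) := by
  obtain ⟨hε0, hε1⟩ := hε
  have key : ∀ δ' : ℝ, 0 < δ' → flatTransform ψ δ' ≤ ENNReal.ofReal (ε * u / 2) →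
      sharpTransform (fun δ => ψ (δ + c)) u ≤ ENNReal.ofReal (max (δ' - c) (c * ε)) := by
    intro δ' hδ' hflat
    refine iInf₂_le _ ⟨lt_max_of_lt_right (by positivity), ?_⟩
    refine iSup₂_le ?_
    rintro σ ⟨hσδ, hσ0⟩
    have hσc : c * ε ≤ σ := le_trans (le_max_right _ _) hσδ
    have hσpos : 0 < σ := lt_of_lt_of_le (by positivity) hσc
    have h1 : ENNReal.ofReal (ψ (σ + c) / (σ + c)) ≤ ENNReal.ofReal (ε * u / 2) := by
      refine le_trans ?_ hflat
      refine le_iSup₂_of_le (σ + c) ⟨?_, by linarith⟩ le_rfl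
      have : δ' - c ≤ σ := le_trans (le_max_left _ _) hσδ
      linarith
    have h2 : ψ (σ + c) / (σ + c) ≤ ε * u / 2 :=
      (ENNReal.ofReal_le_ofReal_iff (by positivity)).mp h1
    have hσcpos : 0 < σ + c := by linarith
    have h3 : ψ (σ + c) ≤ ε * u / 2 * (σ + c) := by
      rwa [div_le_iff₀ hσcpos] at h2
    refine ENNReal.ofReal_le_ofReal ?_
    rw [div_le_iff₀ hσpos]
    nlinarith [hψ (σ + c)]
  set s := sharpTransform ψ (ε * u / 2) with hs
  by_cases hstop : s = ⊤
  · rw [hstop]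
    simp
  · refine ENNReal.le_of_forall_pos_le_add fun η hη _ => ?_
    have hlt2 : s < s + η := ENNReal.lt_add_right hstop (by exact_mod_cast hη.ne')
    have hex : ∃ δ' ∈ {δ : ℝ | 0 < δ ∧ flatTransform ψ δ ≤ ENNReal.ofReal (ε * u / 2)},
        ENNReal.ofReal δ' < s + η := by
      have h := hlt2
      rw [hs, sharpTransform] at h
      simpa [iInf_lt_iff, hs, sharpTransform] using h.trans_le (le_of_eq rfl)
    obtain ⟨δ', ⟨hδ'pos, hδ'flat⟩, hδ'lt⟩ := hex
    refine (key δ' hδ'pos hδ'flat).trans ?_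
    rcases max_cases (δ' - c) (c * ε) with ⟨heq, _⟩ | ⟨heq, _⟩ <;> rw [heq]
    · refine le_trans ?_ (add_le_add (le_max_left _ _) le_rfl)
      rw [ENNReal.ofReal_sub _ hc.le]
      calc ENNReal.ofReal δ' - ENNReal.ofReal c
          ≤ (s + η) - ENNReal.ofReal c := tsub_le_tsub_right hδ'lt.le _
        _ ≤ (s - ENNReal.ofReal c) + η := by
            rw [tsub_le_iff_right]
            calc s + ↑η ≤ (s - ENNReal.ofReal c + ENNReal.ofReal c) + ↑η :=
              add_le_add le_tsub_add le_rfl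
            _ = s - ENNReal.ofReal c + ↑η + ENNReal.ofReal c := by ring
    · exact le_trans (le_max_right _ _) le_self_add
end

section
/- Let η_σ be defined on a ball B(g, 1/(4q)) ⊂ ℝ^d by η_σ(x) = (1 + φ(q(x−g)))/2 with φ(x) = q^{−r} h(‖x‖₂) where h = 1 on [0,1/4] and h = 0 on [1/2,∞), 0 ≤ h ≤ 1. If X is uniform on the union of m such disjoint balls each with total mass w, then P(0 < |η_σ(X) − 1/2| ≤ t) = m·w·1_{t ≥ q^{−r}/2}; consequently the margin condition with exponent α holds provided m·w ≤ (q^{−r}/2)^α. -/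
open MeasureTheory Set Real

/-- **Margin condition for the lower-bound construction.** Let `η_σ` equal
`(1 + φ(q(x−g_i)))/2` on each of `m` disjoint balls `B(g_i, 1/(4q))`, with
`φ(x) = q^{−r} h(‖x‖₂)` where `h = 1` on `[0,1/4]`, `h = 0` on `[1/2,∞)`, `0 ≤ h ≤ 1`.
If `X` has mass `w` uniformly on each ball, then
`P(0 < |η_σ(X) − 1/2| ≤ t) = m w 1_{t ≥ q^{−r}/2}`; consequently the margin condition
with exponent `α` holds provided `m w ≤ (q^{−r}/2)^α`. -/
theorem lower_bound_margin_construction (d : ℕ) (hd : 0 < d)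
    (q m : ℕ) (hq : 0 < q) (hm : 0 < m)
    (r w α : ℝ) (hr : 0 < r) (hw : 0 < w) (hα : 0 < α)
    (g : Fin m → EuclideanSpace ℝ (Fin d))
    (hdisj : Pairwise (Function.onFun Disjoint
      (fun i => Metric.ball (g i) (1 / (4 * (q : ℝ))))))
    (h : ℝ → ℝ)
    (hh1 : ∀ x ∈ Set.Icc (0:ℝ) (1/4), h x = 1)
    (hh0 : ∀ x ∈ Set.Ici (1/2 : ℝ), h x = 0)
    (hhrange : ∀ x : ℝ, 0 ≤ h x ∧ h x ≤ 1)
    (η : EuclideanSpace ℝ (Fin d) → ℝ) (hηm : Measurable η)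
    (hη : ∀ i : Fin m, ∀ x ∈ Metric.ball (g i) (1 / (4 * (q : ℝ))),
      η x = (1 + (q : ℝ) ^ (-r) * h ((q : ℝ) * ‖x - g i‖)) / 2)
    -- the marginal of X: mass `w` spread uniformly over each ball
    (μ : Measure (EuclideanSpace ℝ (Fin d)))
    (hμ : μ = ∑ i : Fin m, (ENNReal.ofReal w) •
      ((volume (Metric.ball (g i) (1 / (4 * (q : ℝ)))))⁻¹ •
        volume.restrict (Metric.ball (g i) (1 / (4 * (q : ℝ)))))) :
    (∀ t : ℝ, 0 < t →
      (μ {x | 0 < |η x - 1/2| ∧ |η x - 1/2| ≤ t}).toReal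
        = if (q : ℝ) ^ (-r) / 2 ≤ t then (m : ℝ) * w else 0) ∧
    ((m : ℝ) * w ≤ ((q : ℝ) ^ (-r) / 2) ^ α →
      ∀ t : ℝ, 0 < t →
        (μ {x | 0 < |η x - 1/2| ∧ |η x - 1/2| ≤ t}).toReal ≤ t ^ α) := by

  have hq' : (0:ℝ) < q := by exact_mod_cast hq
  have hR0 : (0:ℝ) < 1 / (4 * (q:ℝ)) := by positivity
  have hc : 0 < (q:ℝ) ^ (-r) := Real.rpow_pos_of_pos hq' _
  have hval : ∀ i : Fin m, ∀ x ∈ Metric.ball (g i) (1 / (4 * (q:ℝ))),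
      η x - 1/2 = (q:ℝ) ^ (-r) / 2 := by
    intro i x hx
    have hn : (q:ℝ) * ‖x - g i‖ ∈ Set.Icc (0:ℝ) (1/4) := by
      have hlt : ‖x - g i‖ < 1 / (4 * (q:ℝ)) := mem_ball_iff_norm.mp hx
      constructor
      · positivity
      · have h2 : (q:ℝ) * ‖x - g i‖ < (q:ℝ) * (1 / (4 * (q:ℝ))) :=
          mul_lt_mul_of_pos_left hlt hq'
        have h3 : (q:ℝ) * (1 / (4 * (q:ℝ))) = 1/4 := by field_simp
        linarith
    rw [hη i x hx, hh1 _ hn]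
    ring
  have hSmeas : ∀ t : ℝ,
      MeasurableSet {x : EuclideanSpace ℝ (Fin d) | 0 < |η x - 1/2| ∧ |η x - 1/2| ≤ t} := by
    intro t
    have : {x : EuclideanSpace ℝ (Fin d) | 0 < |η x - 1/2| ∧ |η x - 1/2| ≤ t}
        = (fun x => |η x - 1/2|) ⁻¹' (Set.Ioc 0 t) := rfl
    rw [this]
    exact ((hηm.sub measurable_const).abs) measurableSet_Ioc
  have hvol0 : ∀ i : Fin m, volume (Metric.ball (g i) (1 / (4 * (q:ℝ)))) ≠ 0 :=
    fun i => (Metric.measure_ball_pos volume _ hR0).ne'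
  have hvoltop : ∀ i : Fin m, volume (Metric.ball (g i) (1 / (4 * (q:ℝ)))) ≠ ⊤ :=
    fun i => (measure_ball_lt_top).ne
  have key : ∀ t : ℝ, 0 < t →
      (μ {x | 0 < |η x - 1/2| ∧ |η x - 1/2| ≤ t}).toReal
        = if (q : ℝ) ^ (-r) / 2 ≤ t then (m : ℝ) * w else 0 := by
    intro t ht
    set S := {x : EuclideanSpace ℝ (Fin d) | 0 < |η x - 1/2| ∧ |η x - 1/2| ≤ t} with hS
    have hμS : μ S = ∑ i : Fin m, ENNReal.ofReal w *
        ((volume (Metric.ball (g i) (1 / (4 * (q:ℝ)))))⁻¹ *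
          volume (S ∩ Metric.ball (g i) (1 / (4 * (q:ℝ))))) := by
      rw [hμ, Measure.finset_sum_apply]
      congr 1
      ext i
      rw [Measure.smul_apply, Measure.smul_apply, Measure.restrict_apply (hSmeas t)]
      simp only [smul_eq_mul]
      rfl
    by_cases hle : (q : ℝ) ^ (-r) / 2 ≤ t
    · have hsub : ∀ i : Fin m,
          S ∩ Metric.ball (g i) (1 / (4 * (q:ℝ))) = Metric.ball (g i) (1 / (4 * (q:ℝ))) := by
        intro i
        apply Set.inter_eq_self_of_subset_right
        intro x hx
        have := hval i x hx
        constructor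
        · rw [this]; rw [abs_of_pos (by positivity)]; positivity
        · rw [this, abs_of_pos (by positivity)]; exact hle
      rw [if_pos hle, hμS]
      have hterm : ∀ i : Fin m, ENNReal.ofReal w *
          ((volume (Metric.ball (g i) (1 / (4 * (q:ℝ)))))⁻¹ *
            volume (S ∩ Metric.ball (g i) (1 / (4 * (q:ℝ))))) = ENNReal.ofReal w := by
        intro i
        rw [hsub i, ENNReal.inv_mul_cancel (hvol0 i) (hvoltop i), mul_one]
      rw [Finset.sum_congr rfl (fun i _ => hterm i)]
      simp [ENNReal.toReal_ofReal hw.le, mul_comm]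
    · have hsub : ∀ i : Fin m,
          S ∩ Metric.ball (g i) (1 / (4 * (q:ℝ))) = ∅ := by
        intro i
        ext x
        simp only [Set.mem_inter_iff, Set.mem_empty_iff_false, iff_false, not_and]
        intro hxS hxB
        have := hval i x hxB
        have habs : |η x - 1/2| = (q:ℝ) ^ (-r) / 2 := by
          rw [this, abs_of_pos (by positivity)]
        exact hle (habs ▸ hxS.2)
      rw [if_neg hle, hμS]
      have hterm : ∀ i : Fin m, ENNReal.ofReal w *
          ((volume (Metric.ball (g i) (1 / (4 * (q:ℝ)))))⁻¹ *
            volume (S ∩ Metric.ball (g i) (1 / (4 * (q:ℝ))))) = 0 := by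
        intro i; rw [hsub i]; simp
      rw [Finset.sum_congr rfl (fun i _ => hterm i)]
      simp
  refine ⟨key, ?_⟩
  intro hmw t ht
  rw [key t ht]
  by_cases hle : (q : ℝ) ^ (-r) / 2 ≤ t
  · rw [if_pos hle]
    calc (m : ℝ) * w ≤ ((q : ℝ) ^ (-r) / 2) ^ α := hmw
      _ ≤ t ^ α := Real.rpow_le_rpow (by positivity) hle hα.le
  · rw [if_neg hle]
    exact Real.rpow_nonneg ht.le α
end

section
/- Assouad's lemma: Let {P_σ : σ ∈ {0,1}^m} be probability measures such that the total variation distance V(P_σ, P_{σ'}) ≤ α < 1 whenever the Hamming distance ρ(σ, σ') = 1. Then inf over estimators σ̂ (measurable functions of the data into {0,1}^m) of max_{σ ∈ {0,1}^m} E_{P_σ}[ρ(σ̂, σ)] is at least (m/2)(1 − α). -/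
open MeasureTheory Set

/-- Total variation distance `V(P,Q) = sup_A |P(A) − Q(A)|` over measurable sets. -/
noncomputable def tvDist {Ω : Type*} [MeasurableSpace Ω] (P Q : Measure Ω) : ℝ :=
  sSup {r : ℝ | ∃ A : Set Ω, MeasurableSet A ∧ r = |(P A).toReal - (Q A).toReal|}

/-- Hamming distance on `{0,1}^m` (as a real number). -/
def hamming01 {m : ℕ} (σ σ' : Fin m → Bool) : ℝ :=
  ∑ i : Fin m, if σ i ≠ σ' i then 1 else 0

lemma abs_diff_le_tv {Ω : Type*} [MeasurableSpace Ω] (P Q : Measure Ω)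
    [IsProbabilityMeasure P] [IsProbabilityMeasure Q] {A : Set Ω} (hA : MeasurableSet A) :
    |(P A).toReal - (Q A).toReal| ≤ tvDist P Q := by
  apply le_csSup
  · refine ⟨1, ?_⟩
    rintro r ⟨B, hB, rfl⟩
    have hp : (P B).toReal ≤ 1 := by
      have := prob_le_one (μ := P) (s := B)
      simpa using ENNReal.toReal_mono (by simp) this
    have hq : (Q B).toReal ≤ 1 := by
      have := prob_le_one (μ := Q) (s := B)
      simpa using ENNReal.toReal_mono (by simp) this
    have hp0 : 0 ≤ (P B).toReal := ENNReal.toReal_nonneg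
    have hq0 : 0 ≤ (Q B).toReal := ENNReal.toReal_nonneg
    exact abs_le.2 ⟨by linarith, by linarith⟩
  · exact ⟨A, hA, rfl⟩

/-- **Assouad's lemma.** If `{P_σ : σ ∈ {0,1}^m}` are probability measures with
`V(P_σ, P_{σ'}) ≤ α < 1` whenever `ρ(σ, σ') = 1`, then every estimator `σ̂`
has maximal risk `max_σ E_{P_σ}[ρ(σ̂, σ)] ≥ (m/2)(1 − α)`. -/
theorem assouad_lemma {Ω : Type*} [MeasurableSpace Ω] (m : ℕ)
    (P : (Fin m → Bool) → Measure Ω)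
    (hP : ∀ σ, IsProbabilityMeasure (P σ))
    (α : ℝ) (hα : α < 1)
    (hTV : ∀ σ σ' : Fin m → Bool, hamming01 σ σ' = 1 → tvDist (P σ) (P σ') ≤ α)
    (σhat : Ω → (Fin m → Bool)) (hσhat : Measurable σhat) :
    ∃ σ : Fin m → Bool,
      (m : ℝ) / 2 * (1 - α) ≤ ∫ ω, hamming01 (σhat ω) σ ∂(P σ) := by
  classical
  have := fun σ => hP σ
  -- measurability of the coordinate-error events
  have hmeasA : ∀ (i : Fin m) (b : Bool), MeasurableSet {ω | σhat ω i ≠ b} := by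
    intro i b
    have h1 : {ω | σhat ω i ≠ b} = (fun ω => σhat ω i) ⁻¹' ({b}ᶜ) := by
      ext ω; cases σhat ω i <;> cases b <;> simp
    rw [h1]
    exact ((measurable_pi_apply i).comp hσhat) (measurableSet_singleton b).compl
  set p : (Fin m → Bool) → Fin m → ℝ :=
    fun σ i => (P σ {ω | σhat ω i ≠ σ i}).toReal with hp_def
  -- the risk equals the sum of coordinate error probabilities
  have hrisk : ∀ σ, ∫ ω, hamming01 (σhat ω) σ ∂(P σ) = ∑ i, p σ i := by
    intro σ
    have := hP σ
    unfold hamming01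
    have heq : ∀ i : Fin m, (fun ω => if σhat ω i ≠ σ i then (1:ℝ) else 0)
        = Set.indicator {ω | σhat ω i ≠ σ i} (fun _ => (1:ℝ)) := by
      intro i; funext ω; simp [Set.indicator_apply]
    rw [integral_finset_sum]
    · refine Finset.sum_congr rfl fun i _ => ?_
      rw [show (fun ω => if σhat ω i ≠ σ i then (1:ℝ) else 0)
          = Set.indicator {ω | σhat ω i ≠ σ i} (fun _ => (1:ℝ)) from heq i,
        integral_indicator_const (1:ℝ) (hmeasA i (σ i)), smul_eq_mul, mul_one]
      rfl
    · intro i _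
      rw [heq i]
      exact (integrable_const (1:ℝ)).indicator (hmeasA i (σ i))
  -- flipping one coordinate
  set flip : (Fin m → Bool) → Fin m → (Fin m → Bool) :=
    fun σ i => Function.update σ i (!σ i) with hflip_def
  have hham : ∀ σ i, hamming01 σ (flip σ i) = 1 := by
    intro σ i
    unfold hamming01
    rw [Finset.sum_eq_single i]
    · simp [hflip_def]
    · intro j _ hj
      simp [hflip_def, Function.update_of_ne hj]
    · simp
  have hinv : ∀ i, Function.Involutive (fun σ => flip σ i) := by
    intro i σ
    simp [hflip_def, Function.update_idem]
  -- the pairing bound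
  have hpair : ∀ σ i, 1 - α ≤ p σ i + p (flip σ i) i := by
    intro σ i
    have h1 := hP σ
    have h2 := hP (flip σ i)
    set A : Set Ω := {ω | σhat ω i ≠ σ i} with hA_def
    have hAc : {ω | σhat ω i ≠ (flip σ i) i} = Aᶜ := by
      ext ω
      simp only [hflip_def, Function.update_self, hA_def, mem_setOf_eq, mem_compl_iff]
      cases σhat ω i <;> cases σ i <;> simp
    have hcompl : p (flip σ i) i = 1 - (P (flip σ i) A).toReal := by
      rw [hp_def]
      simp only [hAc]
      rw [prob_compl_eq_one_sub (hmeasA i (σ i))]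
      rw [ENNReal.toReal_sub_of_le prob_le_one ENNReal.one_ne_top]
      simp [hA_def]
    have htv : |(P σ A).toReal - (P (flip σ i) A).toReal| ≤ α :=
      le_trans (abs_diff_le_tv (P σ) (P (flip σ i)) (hmeasA i (σ i)))
        (hTV σ (flip σ i) (hham σ i))
    have habs : (P (flip σ i) A).toReal - (P σ A).toReal ≤ α := by
      have := neg_abs_le ((P σ A).toReal - (P (flip σ i) A).toReal)
      linarith [abs_le.1 htv |>.1]
    rw [hcompl]
    simp only [hp_def, ← hA_def]
    linarith
  -- sum over all σ
  have hflip_sum : ∀ i, ∑ σ : Fin m → Bool, p (flip σ i) i = ∑ σ : Fin m → Bool, p σ i := by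
    intro i
    exact Fintype.sum_bijective (fun σ => flip σ i) ((hinv i).bijective) _ _ (fun σ => rfl)
  have hcard : (Fintype.card (Fin m → Bool) : ℝ) = 2 ^ m := by
    simp [Fintype.card_fun]
  have hsum : (2:ℝ) ^ m * ((m : ℝ) * (1 - α)) ≤ 2 * ∑ σ : Fin m → Bool, ∑ i, p σ i := by
    have h1 : 2 * ∑ σ : Fin m → Bool, ∑ i, p σ i
        = ∑ i : Fin m, ∑ σ : Fin m → Bool, (p σ i + p (flip σ i) i) := by
      have hc : ∑ σ : Fin m → Bool, ∑ i, p σ i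
          = ∑ i : Fin m, ∑ σ : Fin m → Bool, p σ i := Finset.sum_comm
      rw [hc, two_mul, ← Finset.sum_add_distrib]
      refine Finset.sum_congr rfl fun i _ => ?_
      rw [Finset.sum_add_distrib, hflip_sum i]
    rw [h1]
    have h2 : ∑ i : Fin m, ∑ σ : Fin m → Bool, (1 - α)
        ≤ ∑ i : Fin m, ∑ σ : Fin m → Bool, (p σ i + p (flip σ i) i) :=
      Finset.sum_le_sum fun i _ => Finset.sum_le_sum fun σ _ => hpair σ i
    calc (2:ℝ) ^ m * ((m : ℝ) * (1 - α))
        = ∑ i : Fin m, ∑ σ : Fin m → Bool, (1 - α) := by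
          simp [Finset.sum_const, hcard]
          ring
      _ ≤ _ := h2
  -- conclude by averaging
  by_contra hcon
  push_neg at hcon
  have hlt : ∑ σ : Fin m → Bool, ∑ i, p σ i
      < ∑ σ : Fin m → Bool, ((m : ℝ) / 2 * (1 - α)) := by
    refine Finset.sum_lt_sum_of_nonempty Finset.univ_nonempty fun σ _ => ?_
    rw [← hrisk σ]
    exact hcon σ
  rw [Finset.sum_const, nsmul_eq_mul, Finset.card_univ, hcard] at hlt
  have h2m : (0:ℝ) < 2 ^ m := by positivity
  nlinarith
end
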